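/- Let $N, t, k$ be positive integers and let $H_1, \ldots, H_k$ be graphs, each on the vertex set $\{1,\ldots,N\}$. Suppose that $\binom{N}{t} \cdot \prod_{i=1}^{k} \frac{i_t(H_i)}{\binom{N}{t}} < 1$. Then there exist permutations $\sigma_1, \ldots, \sigma_k$ of $\{1,\ldots,N\}$ such that no set $I \subseteq \{1,\ldots,N\}$ of size $t$ is simultaneously an independent set in every permuted graph $\sigma_i(H_i)$ (where $\sigma_i(H_i)$ is the graph with edges $\{\sigma_i(u), \sigma_i(v)\}$ for each edge $\{u,v\}$ of $H_i$). -/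

import Mathlib

open scoped Classical

/-- `i_t(H)`: the number of independent sets of order `t` in `H`. -/
noncomputable def indepCount {V : Type*} [Fintype V] (H : SimpleGraph V) (t : ℕ) : ℕ :=
  Nat.card {I : Finset V // I.card = t ∧ ∀ u ∈ I, ∀ v ∈ I, u ≠ v → ¬ H.Adj u v}

lemma keyiff (n : ℕ) (I J : Finset (Fin n)) (σ : Equiv.Perm (Fin n))
    (hσ : J.image σ = I) : ∀ x, x ∈ J ↔ σ x ∈ I := by
  intro x
  constructor
  · intro hx; rw [← hσ]; exact Finset.mem_image_of_mem _ hx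
  · intro hx
    rw [← hσ] at hx
    obtain ⟨y, hy, hxy⟩ := Finset.mem_image.mp hx
    rwa [← σ.injective hxy]

lemma fiberA (n : ℕ) (I J : Finset (Fin n)) (h : I.card = J.card) :
    (Finset.univ.filter (fun σ : Equiv.Perm (Fin n) => J.image σ = I)).card ≤
      Nat.factorial J.card * Nat.factorial (n - J.card) := by
  classical
  rw [Finset.filter_congr_decidable, ← Fintype.card_subtype]
  have hinj : Function.Injective
      (fun σ : {σ : Equiv.Perm (Fin n) // J.image σ = I} =>
       (((σ : Equiv.Perm (Fin n)).subtypeEquiv (keyiff n I J σ σ.2) :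
          {x // x ∈ J} ≃ {x // x ∈ I}),
        ((σ : Equiv.Perm (Fin n)).subtypeEquiv
          (fun x => not_congr (keyiff n I J σ σ.2 x)) :
          {x // ¬ x ∈ J} ≃ {x // ¬ x ∈ I}))) := by
    rintro ⟨σ, hσ⟩ ⟨σ', hσ'⟩ hpair
    simp only [Prod.mk.injEq] at hpair
    ext x
    by_cases hx : x ∈ J
    · have := congrArg (fun e : ({x // x ∈ J} ≃ {x // x ∈ I}) => (e ⟨x, hx⟩ : Fin n)) hpair.1
      exact congrArg Fin.val (by simpa [Equiv.subtypeEquiv] using this)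
    · have := congrArg (fun e : ({x // ¬ x ∈ J} ≃ {x // ¬ x ∈ I}) => (e ⟨x, hx⟩ : Fin n)) hpair.2
      exact congrArg Fin.val (by simpa [Equiv.subtypeEquiv] using this)
  have := Fintype.card_le_of_injective _ hinj
  refine this.trans ?_
  rw [Fintype.card_prod]
  have e1 : {x // x ∈ J} ≃ {x // x ∈ I} := Fintype.equivOfCardEq (by simp [h])
  have e2 : {x // ¬ x ∈ J} ≃ {x // ¬ x ∈ I} :=
    Fintype.equivOfCardEq (by
      rw [Fintype.card_subtype_compl, Fintype.card_subtype_compl]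
      simp [h])
  rw [Fintype.card_equiv e1, Fintype.card_equiv e2]
  apply le_of_eq
  congr 1
  · simp
  · rw [Fintype.card_subtype_compl]
    simp

lemma indepCount_eq {n : ℕ} (H : SimpleGraph (Fin n)) (t : ℕ) :
    indepCount H t = (Finset.univ.filter (fun J : Finset (Fin n) =>
      J.card = t ∧ ∀ u ∈ J, ∀ v ∈ J, u ≠ v → ¬ H.Adj u v)).card := by
  rw [indepCount, Nat.card_eq_fintype_card, Fintype.card_subtype]

lemma perGraph (n t : ℕ) (H : SimpleGraph (Fin n)) (I : Finset (Fin n)) (hI : I.card = t) :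
    (Finset.univ.filter (fun σ : Equiv.Perm (Fin n) =>
      ∀ u ∈ I, ∀ v ∈ I, u ≠ v → ¬ (H.map σ.toEmbedding).Adj u v)).card ≤
    indepCount H t * (Nat.factorial t * Nat.factorial (n - t)) := by
  classical
  set s := Finset.univ.filter (fun σ : Equiv.Perm (Fin n) =>
      ∀ u ∈ I, ∀ v ∈ I, u ≠ v → ¬ (H.map σ.toEmbedding).Adj u v) with hs
  set f : Equiv.Perm (Fin n) → Finset (Fin n) := fun σ => I.image σ.symm with hf
  have hJcard : ∀ σ : Equiv.Perm (Fin n), (f σ).card = t := by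
    intro σ
    rw [hf]; rw [Finset.card_image_of_injective _ σ.symm.injective, hI]
  have step1 : s.card ≤ (Nat.factorial t * Nat.factorial (n - t)) * (s.image f).card := by
    apply Finset.card_le_mul_card_image
    intro J hJ
    obtain ⟨σ₀, hσ₀s, hσ₀⟩ := Finset.mem_image.mp hJ
    have hJc : J.card = t := by rw [← hσ₀]; exact hJcard σ₀
    have hsub : s.filter (fun σ => f σ = J) ⊆
        Finset.univ.filter (fun σ : Equiv.Perm (Fin n) => J.image σ = I) := by
      intro σ hσ
      simp only [Finset.mem_filter] at hσ ⊢
      refine ⟨Finset.mem_univ _, ?_⟩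
      rw [← hσ.2, hf]
      simp [Finset.image_image, Function.comp]
    calc (s.filter (fun σ => f σ = J)).card
        ≤ (Finset.univ.filter (fun σ : Equiv.Perm (Fin n) => J.image σ = I)).card :=
          Finset.card_le_card hsub
      _ ≤ Nat.factorial J.card * Nat.factorial (n - J.card) := fiberA n I J (by rw [hI, hJc])
      _ = Nat.factorial t * Nat.factorial (n - t) := by rw [hJc]
  have step2 : (s.image f).card ≤ indepCount H t := by
    rw [indepCount_eq]
    apply Finset.card_le_card
    intro J hJ
    obtain ⟨σ, hσs, hσ⟩ := Finset.mem_image.mp hJ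
    simp only [hs, Finset.mem_filter] at hσs
    simp only [Finset.mem_filter]
    refine ⟨Finset.mem_univ _, by rw [← hσ]; exact hJcard σ, ?_⟩
    intro u hu v hv huv hadj
    rw [← hσ] at hu hv
    have hσu : σ u ∈ I := by
      obtain ⟨a, ha, hau⟩ := Finset.mem_image.mp hu
      rw [← hau]; simpa using ha
    have hσv : σ v ∈ I := by
      obtain ⟨a, ha, hav⟩ := Finset.mem_image.mp hv
      rw [← hav]; simpa using ha
    have hne : σ u ≠ σ v := fun h => huv (σ.injective h)
    exact hσs.2 (σ u) hσu (σ v) hσv hne ⟨hne, u, v, hadj, rfl, rfl⟩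
  calc s.card ≤ (Nat.factorial t * Nat.factorial (n - t)) * (s.image f).card := step1
    _ ≤ (Nat.factorial t * Nat.factorial (n - t)) * indepCount H t :=
        Nat.mul_le_mul_left _ step2
    _ = indepCount H t * (Nat.factorial t * Nat.factorial (n - t)) := Nat.mul_comm _ _

lemma card_filter_eq_natCard {α : Type*} [Fintype α] (p : α → Prop) [DecidablePred p] :
    (Finset.univ.filter p).card = Nat.card {x // p x} := by
  rw [Nat.card_eq_fintype_card, Fintype.card_subtype]

lemma perGraphNat (n t : ℕ) (H : SimpleGraph (Fin n)) (I : Finset (Fin n)) (hI : I.card = t) :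
    Nat.card {σ : Equiv.Perm (Fin n) //
      ∀ u ∈ I, ∀ v ∈ I, u ≠ v → ¬ (H.map σ.toEmbedding).Adj u v} ≤
    indepCount H t * (Nat.factorial t * Nat.factorial (n - t)) := by
  rw [← card_filter_eq_natCard]
  convert perGraph n t H I hI using 3

lemma piCardNat {k n : ℕ} (P : Fin k → Equiv.Perm (Fin n) → Prop) :
    Nat.card {σ : Fin k → Equiv.Perm (Fin n) // ∀ i, P i (σ i)} =
      ∏ i : Fin k, Nat.card {τ : Equiv.Perm (Fin n) // P i τ} := by
  rw [Nat.card_congr (Equiv.subtypePiEquivPi (p := P))]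
  exact Nat.card_pi

/-- If `binom(N,t) ∏ᵢ (i_t(Hᵢ) / binom(N,t)) < 1`, then there are permutations `σᵢ` of the
vertices such that no `t`-set is simultaneously independent in all the permuted graphs
`σᵢ(Hᵢ)`. -/
theorem random_permutations (N t k : ℕ) (hN : 0 < N) (ht : 0 < t) (hk : 0 < k)
    (H : Fin k → SimpleGraph (Fin N))
    (hcount : (N.choose t : ℝ) *
      ∏ i : Fin k, ((indepCount (H i) t : ℝ) / (N.choose t : ℝ)) < 1) :
    ∃ σ : Fin k → Equiv.Perm (Fin N),
      ¬ ∃ I : Finset (Fin N), I.card = t ∧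
        ∀ i : Fin k, ∀ u ∈ I, ∀ v ∈ I, u ≠ v →
          ¬ ((H i).map (σ i).toEmbedding).Adj u v := by
  classical
  by_cases htN : t ≤ N
  swap
  · refine ⟨fun _ => 1, ?_⟩
    rintro ⟨I, hIcard, -⟩
    have : I.card ≤ N := by simpa using Finset.card_le_univ I
    omega
  set C := N.choose t with hC
  have hCpos : 0 < C := Nat.choose_pos htN
  have hr : (C : ℝ) * ∏ i : Fin k, (indepCount (H i) t : ℝ) < (C : ℝ) ^ k := by
    have h0 : (0 : ℝ) < (C : ℝ) ^ k := by positivity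
    rw [Finset.prod_div_distrib, Finset.prod_const, Finset.card_univ, Fintype.card_fin] at hcount
    rw [mul_div_assoc'] at hcount
    exact (div_lt_one h0).mp hcount
  have hnat : C * ∏ i : Fin k, indepCount (H i) t < C ^ k := by exact_mod_cast hr
  set D := Nat.factorial t * Nat.factorial (N - t) with hD
  have hDpos : 0 < D := Nat.mul_pos (Nat.factorial_pos _) (Nat.factorial_pos _)
  set badSet := Finset.univ.filter (fun σ : Fin k → Equiv.Perm (Fin N) =>
    ∃ I : Finset (Fin N), I.card = t ∧
      ∀ i : Fin k, ∀ u ∈ I, ∀ v ∈ I, u ≠ v →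
        ¬ ((H i).map (σ i).toEmbedding).Adj u v) with hbad
  have hsubset : badSet ⊆ (Finset.powersetCard t (Finset.univ : Finset (Fin N))).biUnion
      (fun I => Finset.univ.filter (fun σ : Fin k → Equiv.Perm (Fin N) =>
        ∀ i : Fin k, ∀ u ∈ I, ∀ v ∈ I, u ≠ v →
          ¬ ((H i).map (σ i).toEmbedding).Adj u v)) := by
    intro σ hσ
    simp only [hbad, Finset.mem_filter] at hσ
    obtain ⟨-, I, hIcard, hI⟩ := hσ
    apply Finset.mem_biUnion.mpr
    exact ⟨I, Finset.mem_powersetCard.mpr ⟨Finset.subset_univ _, hIcard⟩,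
      Finset.mem_filter.mpr ⟨Finset.mem_univ _, hI⟩⟩
  have hbound : badSet.card ≤ C * ∏ i : Fin k, (indepCount (H i) t * D) := by
    refine (Finset.card_le_card hsubset).trans ?_
    refine (Finset.card_biUnion_le).trans ?_
    have hone : ∀ I ∈ Finset.powersetCard t (Finset.univ : Finset (Fin N)),
        (Finset.univ.filter (fun σ : Fin k → Equiv.Perm (Fin N) =>
          ∀ i : Fin k, ∀ u ∈ I, ∀ v ∈ I, u ≠ v →
            ¬ ((H i).map (σ i).toEmbedding).Adj u v)).card ≤
          ∏ i : Fin k, (indepCount (H i) t * D) := by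
      intro I hI
      have hIcard : I.card = t := (Finset.mem_powersetCard.mp hI).2
      rw [card_filter_eq_natCard]
      rw [piCardNat (fun i τ => ∀ u ∈ I, ∀ v ∈ I, u ≠ v → ¬ ((H i).map τ.toEmbedding).Adj u v)]
      exact Finset.prod_le_prod' (fun i _ => perGraphNat N t (H i) I hIcard)
    refine (Finset.sum_le_sum hone).trans ?_
    rw [Finset.sum_const, Finset.card_powersetCard, Finset.card_univ, Fintype.card_fin]
    simp [hC, smul_eq_mul]
  have hfull : Fintype.card (Fin k → Equiv.Perm (Fin N)) = (Nat.factorial N) ^ k := by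
    rw [Fintype.card_fun, Fintype.card_perm, Fintype.card_fin, Fintype.card_fin]
  have hlt : badSet.card < Fintype.card (Fin k → Equiv.Perm (Fin N)) := by
    rw [hfull]
    calc badSet.card ≤ C * ∏ i : Fin k, (indepCount (H i) t * D) := hbound
      _ = (C * ∏ i : Fin k, indepCount (H i) t) * D ^ k := by
          rw [Finset.prod_mul_distrib, Finset.prod_const, Finset.card_univ, Fintype.card_fin]
          ring
      _ < C ^ k * D ^ k := by
          apply Nat.mul_lt_mul_of_lt_of_le hnat (le_refl _)
          positivity
      _ = (C * D) ^ k := (mul_pow C D k).symm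
      _ = (Nat.factorial N) ^ k := by
          congr 1
          rw [hC, hD, ← Nat.mul_assoc]
          exact Nat.choose_mul_factorial_mul_factorial htN
  by_contra hcon
  push_neg at hcon
  have hsub2 : (Finset.univ : Finset (Fin k → Equiv.Perm (Fin N))) ⊆ badSet := by
    intro σ _
    simp only [hbad, Finset.mem_filter]
    exact ⟨Finset.mem_univ _, hcon σ⟩
  have := Finset.card_le_card hsub2
  rw [Finset.card_univ] at this
  omega
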